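/- Let φ : ℝ → ℝ be measurable with φ(0) = 0 and suppose there exists C ≥ 0 such that |φ(u)| ≤ C·|u| for all u ∈ ℝ. Then the following are equivalent: (i) for all τ ∈ ℝ and all signals x in L²[0,∞), ∫₀^∞ x(t+τ)·φ(x(t)) dt ≤ ∫₀^∞ x(t)·φ(x(t)) dt; (ii) φ is monotone nondecreasing (u ≤ v implies φ(u) ≤ φ(v)). -/

import Mathlib

open MeasureTheory Set

/-- A signal in L²[0,∞): square integrable over ℝ and vanishing on (−∞,0). -/
def IsSignal (x : ℝ → ℝ) : Prop :=
  MemLp x 2 volume ∧ ∀ t < (0:ℝ), x t = 0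


lemma l2mul {f g : ℝ → ℝ} (hf : MemLp f 2 volume) (hg : MemLp g 2 volume) :
    Integrable (fun t => f t * g t) volume := by
  refine Integrable.mono' ((hf.integrable_sq.add hg.integrable_sq).div_const 2)
    (hf.aestronglyMeasurable.mul hg.aestronglyMeasurable) (Filter.Eventually.of_forall fun t => ?_)
  have h := sq_nonneg (|f t| - |g t|)
  rw [Real.norm_eq_abs, abs_mul]
  have h1 : |f t|^2 = f t ^2 := sq_abs _
  have h2 : |g t|^2 = g t ^2 := sq_abs _
  simp only [Pi.add_apply]
  nlinarith [abs_nonneg (f t), abs_nonneg (g t)]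

lemma fwd (φ : ℝ → ℝ) (hφ : Measurable φ) (hφ0 : φ 0 = 0)
    (C : ℝ) (hC0 : 0 ≤ C) (hC : ∀ u : ℝ, |φ u| ≤ C * |u|) (hmono : Monotone φ)
    (τ : ℝ) (x : ℝ → ℝ) (hx2 : MemLp x 2 volume) (hx0 : ∀ t < (0:ℝ), x t = 0) :
    ∫ t in Ici (0:ℝ), x (t + τ) * φ (x t) ≤ ∫ t in Ici (0:ℝ), x t * φ (x t) := by
  set Φ : ℝ → ℝ := fun u => ∫ s in (0:ℝ)..u, φ s with hΦdef
  have hIInt : ∀ a b : ℝ, IntervalIntegrable φ volume a b := fun a b => hmono.intervalIntegrable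
  have hΦcont : Continuous Φ := intervalIntegral.continuous_primitive hIInt 0
  have hΦ0 : Φ 0 = 0 := intervalIntegral.integral_same
  have key : ∀ p q : ℝ, (p - q) * φ q ≤ Φ p - Φ q := by
    intro p q
    have hpq : Φ p - Φ q = ∫ s in q..p, φ s := by
      have h := intervalIntegral.integral_add_adjacent_intervals (hIInt 0 q) (hIInt q p)
      simp only [hΦdef]
      linarith
    rcases le_total q p with h | h
    · have hm : ∫ s in q..p, φ q ≤ ∫ s in q..p, φ s :=
        intervalIntegral.integral_mono_on h intervalIntegrable_const (hIInt q p)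
          (fun s hs => hmono hs.1)
      rw [intervalIntegral.integral_const, smul_eq_mul] at hm
      rw [hpq]; linarith
    · have hm : ∫ s in p..q, φ s ≤ ∫ s in p..q, φ q :=
        intervalIntegral.integral_mono_on h (hIInt p q) intervalIntegrable_const
          (fun s hs => hmono hs.2)
      rw [intervalIntegral.integral_const, smul_eq_mul] at hm
      have : ∫ s in q..p, φ s = -∫ s in p..q, φ s := by
        rw [intervalIntegral.integral_symm]
      rw [hpq, this]; nlinarith
  have hΦnonneg : ∀ u : ℝ, 0 ≤ Φ u := by
    intro u
    have := key u 0
    simp [hφ0, hΦ0] at this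
    linarith
  have hΦbound : ∀ u : ℝ, |Φ u| ≤ C * u ^ 2 := by
    intro u
    have h := intervalIntegral.norm_integral_le_of_norm_le_const
      (C := C * |u|) (f := φ) (a := 0) (b := u) ?_
    · rw [Real.norm_eq_abs] at h
      calc |Φ u| ≤ C * |u| * |u - 0| := h
        _ = C * u ^ 2 := by rw [sub_zero, mul_assoc, abs_mul_abs_self, sq]
    · intro s hs
      rw [Real.norm_eq_abs]
      refine (hC s).trans (mul_le_mul_of_nonneg_left ?_ hC0)
      rw [uIoc] at hs
      rcases le_total 0 u with h' | h'
      · rw [min_eq_left h', max_eq_right h'] at hs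
        rw [abs_of_nonneg (le_of_lt hs.1), abs_of_nonneg h']
        exact hs.2
      · rw [min_eq_right h', max_eq_left h'] at hs
        rw [abs_of_nonpos hs.2, abs_of_nonpos h']
        linarith [hs.1]
  -- measurability
  have hxm : AEMeasurable x volume := hx2.aestronglyMeasurable.aemeasurable
  have φx_sm : AEStronglyMeasurable (fun t => φ (x t)) volume :=
    (hφ.comp_aemeasurable hxm).aestronglyMeasurable
  have φx_mem : MemLp (fun t => φ (x t)) 2 volume := by
    refine MemLp.of_le_mul (c := C) hx2 φx_sm (Filter.Eventually.of_forall fun t => ?_)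
    simpa [Real.norm_eq_abs] using hC (x t)
  have hmp : MeasurePreserving (fun t : ℝ => t + τ) volume volume :=
    measurePreserving_add_right volume τ
  have xshift : MemLp (fun t => x (t + τ)) 2 volume := hx2.comp_measurePreserving hmp
  have int1 : Integrable (fun t => x (t + τ) * φ (x t)) volume := l2mul xshift φx_mem
  have int2 : Integrable (fun t => x t * φ (x t)) volume := l2mul hx2 φx_mem
  have Φx_sm : AEStronglyMeasurable (fun t => Φ (x t)) volume :=
    hΦcont.comp_aestronglyMeasurable hx2.aestronglyMeasurable
  have intΦ : Integrable (fun t => Φ (x t)) volume := by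
    refine Integrable.mono' (hx2.integrable_sq.const_mul C) Φx_sm
      (Filter.Eventually.of_forall fun t => ?_)
    simpa [Real.norm_eq_abs] using hΦbound (x t)
  have intΦs : Integrable (fun t => Φ (x (t + τ))) volume :=
    (hmp.integrable_comp Φx_sm).2 intΦ
  have int3 : Integrable (fun t => Φ (x (t + τ)) - Φ (x t)) volume := intΦs.sub intΦ
  -- step 1
  have step1 : ∫ t in Ici (0:ℝ), x (t + τ) * φ (x t)
      ≤ ∫ t in Ici (0:ℝ), (x t * φ (x t) + (Φ (x (t + τ)) - Φ (x t))) := by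
    refine setIntegral_mono int1.integrableOn ((int2.add int3).integrableOn)
      (fun t => ?_)
    have := key (x (t + τ)) (x t)
    simp only
    linarith
  have split : ∫ t in Ici (0:ℝ), (x t * φ (x t) + (Φ (x (t + τ)) - Φ (x t)))
      = (∫ t in Ici (0:ℝ), x t * φ (x t)) + ((∫ t in Ici (0:ℝ), Φ (x (t + τ)))
        - ∫ t in Ici (0:ℝ), Φ (x t)) := by
    rw [integral_add int2.integrableOn int3.integrableOn,
      integral_sub intΦs.integrableOn intΦ.integrableOn]
  -- step 2 : shift integral ≤ original
  have hQ : ∫ t in Ici (0:ℝ), Φ (x t) = ∫ t, Φ (x t) := by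
    have hcompl : ∫ t in (Ici (0:ℝ))ᶜ, Φ (x t) = 0 := by
      rw [compl_Ici]
      have : EqOn (fun t => Φ (x t)) (fun _ => (0:ℝ)) (Iio (0:ℝ)) := by
        intro t ht
        simp [hx0 t ht, hΦ0]
      rw [setIntegral_congr_fun measurableSet_Iio this]
      simp
    have := integral_add_compl (measurableSet_Ici (a := (0:ℝ))) intΦ
    rw [hcompl, add_zero] at this
    exact this
  have hP : ∫ t in Ici (0:ℝ), Φ (x (t + τ)) ≤ ∫ t, Φ (x (t + τ)) :=
    setIntegral_le_integral intΦs (Filter.Eventually.of_forall fun t => hΦnonneg _)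
  have hshift : ∫ t, Φ (x (t + τ)) = ∫ t, Φ (x t) :=
    integral_add_right_eq_self (fun t => Φ (x t)) τ
  have step2 : ∫ t in Ici (0:ℝ), Φ (x (t + τ)) ≤ ∫ t in Ici (0:ℝ), Φ (x t) := by
    rw [hQ]; rw [hshift] at hP; exact hP
  linarith [step1, split ▸ step1]


lemma sum_indicator_eval (m : ℕ) (d : ℕ → ℝ) (t : ℝ) (k : ℕ) (hk : k < m)
    (ht : t ∈ Ico (k:ℝ) (k+1)) :
    (∑ j ∈ Finset.range m, (Ico (j:ℝ) (j+1)).indicator (fun _ => d j) t) = d k := by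
  rw [Finset.sum_eq_single k]
  · simp [indicator_of_mem ht]
  · intro j _ hjk
    apply indicator_of_notMem
    intro hj
    apply hjk
    have h1 : (j:ℝ) < (k:ℝ) + 1 := lt_of_le_of_lt hj.1 ht.2
    have h2 : (k:ℝ) < (j:ℝ) + 1 := lt_of_le_of_lt ht.1 hj.2
    have h1' : j < k + 1 := by exact_mod_cast h1
    have h2' : k < j + 1 := by exact_mod_cast h2
    omega
  · intro h; exact absurd (Finset.mem_range.2 hk) h

lemma sum_indicator_zero (m : ℕ) (d : ℕ → ℝ) (t : ℝ) (ht : t < 0 ∨ (m:ℝ) ≤ t) :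
    (∑ j ∈ Finset.range m, (Ico (j:ℝ) (j+1)).indicator (fun _ => d j) t) = 0 := by
  refine Finset.sum_eq_zero fun j hj => indicator_of_notMem (fun hmem => ?_) _
  rcases ht with h | h
  · exact absurd hmem.1 (by linarith [Nat.cast_nonneg (α := ℝ) j])
  · have : (j:ℝ) + 1 ≤ m := by
      have := Finset.mem_range.1 hj
      exact_mod_cast Nat.succ_le_of_lt this
    linarith [hmem.2]

lemma integral_sum_indicator (m : ℕ) (d : ℕ → ℝ) :
    ∫ t in Ici (0:ℝ), (∑ j ∈ Finset.range m, (Ico (j:ℝ) (j+1)).indicator (fun _ => d j) t)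
      = ∑ j ∈ Finset.range m, d j := by
  rw [integral_finset_sum]
  · refine Finset.sum_congr rfl fun j _ => ?_
    rw [setIntegral_indicator measurableSet_Ico]
    have hsub : Ici (0:ℝ) ∩ Ico (j:ℝ) (j+1) = Ico (j:ℝ) (j+1) :=
      inter_eq_right.2 fun t htt => le_trans (Nat.cast_nonneg j) htt.1
    rw [hsub, setIntegral_const]
    simp [Real.volume_Ico]
  · intro j _
    refine Integrable.restrict ?_
    rw [integrable_indicator_iff measurableSet_Ico]
    exact integrableOn_const (by simp [Real.volume_Ico])

lemma bwd (φ : ℝ → ℝ) (hφ0 : φ 0 = 0)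
    (H : ∀ (τ : ℝ) (x : ℝ → ℝ), (MemLp x 2 volume ∧ ∀ t < (0:ℝ), x t = 0) →
      ∫ t in Ici (0:ℝ), x (t + τ) * φ (x t) ≤ ∫ t in Ici (0:ℝ), x t * φ (x t)) :
    Monotone φ := by
  intro u v huv
  rcases eq_or_lt_of_le huv with rfl | hlt
  · exact le_refl _
  by_contra hbad
  push_neg at hbad
  set c : ℕ → ℝ := fun k => if Even k then u else v with hc
  have hceval : ∀ k : ℕ, c (2*k) = u ∧ c (2*k+1) = v := by
    intro k
    constructor
    · simp [hc, Nat.even_add_one, parity_simps]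
    · simp [hc, Nat.even_add_one, parity_simps]
  -- the main inequality for each n
  have main : ∀ n : ℕ, ((n:ℝ)+1) * (v * φ u + u * φ v) - u * φ v
      ≤ ((n:ℝ)+1) * (u * φ u + v * φ v) := by
    intro n
    set m : ℕ := 2 * (n + 1) with hm
    set x : ℝ → ℝ := fun t => ∑ j ∈ Finset.range m, (Ico (j:ℝ) (j+1)).indicator (fun _ => c j) t
      with hx
    -- x is a signal
    have hxzero : ∀ t, t < 0 ∨ (m:ℝ) ≤ t → x t = 0 := fun t ht => sum_indicator_zero m c t ht
    have hxeval : ∀ k : ℕ, k < m → ∀ t ∈ Ico (k:ℝ) (k+1), x t = c k :=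
      fun k hk t ht => sum_indicator_eval m c t k hk ht
    have hsig : MemLp x 2 volume ∧ ∀ t < (0:ℝ), x t = 0 := by
      constructor
      · apply memLp_finset_sum (Finset.range m)
        intro j _
        exact memLp_indicator_const 2 measurableSet_Ico (c j)
          (Or.inr (by simp [Real.volume_Ico]))
      · exact fun t ht => hxzero t (Or.inl ht)
    -- pointwise identification of both integrands
    have hRfun : ∀ t : ℝ, x t * φ (x t)
        = ∑ j ∈ Finset.range m, (Ico (j:ℝ) (j+1)).indicator
            (fun _ => c j * φ (c j)) t := by
      intro t
      rcases lt_or_ge t 0 with ht | ht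
      · rw [hxzero t (Or.inl ht), sum_indicator_zero m _ t (Or.inl ht), hφ0, mul_zero]
      rcases lt_or_ge t m with ht2 | ht2
      · have hkt : ∃ k : ℕ, k < m ∧ t ∈ Ico (k:ℝ) (k+1) := by
          refine ⟨⌊t⌋.toNat, ?_, ?_⟩
          · have h1 : (⌊t⌋ : ℝ) ≤ t := Int.floor_le t
            have h2 : ⌊t⌋.toNat = ⌊t⌋ := Int.toNat_of_nonneg (Int.floor_nonneg.2 ht)
            have : (⌊t⌋.toNat : ℝ) ≤ t := by rw [← h2] at h1; exact_mod_cast h1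
            have hlt' : (⌊t⌋.toNat : ℝ) < m := lt_of_le_of_lt this ht2
            exact_mod_cast hlt'
          · have h2 : (⌊t⌋.toNat : ℤ) = ⌊t⌋ := Int.toNat_of_nonneg (Int.floor_nonneg.2 ht)
            have hcast : ((⌊t⌋.toNat : ℕ) : ℝ) = ((⌊t⌋ : ℤ) : ℝ) := by exact_mod_cast h2
            constructor
            · rw [hcast]; exact Int.floor_le t
            · rw [hcast]; exact Int.lt_floor_add_one t
        obtain ⟨k, hk, hmem⟩ := hkt
        rw [hxeval k hk t hmem, sum_indicator_eval m _ t k hk hmem]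
      · rw [hxzero t (Or.inr ht2), sum_indicator_zero m _ t (Or.inr ht2), hφ0, mul_zero]
    have hLfun : ∀ t : ℝ, x (t + 1) * φ (x t)
        = ∑ j ∈ Finset.range m, (Ico (j:ℝ) (j+1)).indicator
            (fun _ => (if j + 1 < m then c (j+1) else 0) * φ (c j)) t := by
      intro t
      rcases lt_or_ge t 0 with ht | ht
      · rw [hxzero t (Or.inl ht), hφ0, mul_zero, sum_indicator_zero m _ t (Or.inl ht)]
      rcases lt_or_ge t m with ht2 | ht2
      · have hkt : ∃ k : ℕ, k < m ∧ t ∈ Ico (k:ℝ) (k+1) := by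
          refine ⟨⌊t⌋.toNat, ?_, ?_⟩
          · have h1 : (⌊t⌋ : ℝ) ≤ t := Int.floor_le t
            have h2 : ⌊t⌋.toNat = ⌊t⌋ := Int.toNat_of_nonneg (Int.floor_nonneg.2 ht)
            have : (⌊t⌋.toNat : ℝ) ≤ t := by rw [← h2] at h1; exact_mod_cast h1
            have hlt' : (⌊t⌋.toNat : ℝ) < m := lt_of_le_of_lt this ht2
            exact_mod_cast hlt'
          · have h2 : (⌊t⌋.toNat : ℤ) = ⌊t⌋ := Int.toNat_of_nonneg (Int.floor_nonneg.2 ht)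
            have hcast : ((⌊t⌋.toNat : ℕ) : ℝ) = ((⌊t⌋ : ℤ) : ℝ) := by exact_mod_cast h2
            constructor
            · rw [hcast]; exact Int.floor_le t
            · rw [hcast]; exact Int.lt_floor_add_one t
        obtain ⟨k, hk, hmem⟩ := hkt
        rw [hxeval k hk t hmem, sum_indicator_eval m _ t k hk hmem]
        by_cases hk1 : k + 1 < m
        · have hmem1 : t + 1 ∈ Ico ((k+1:ℕ):ℝ) ((k+1:ℕ)+1) := by
            constructor
            · push_cast; linarith [hmem.1]
            · push_cast; linarith [hmem.2]
          rw [hxeval (k+1) hk1 (t+1) hmem1, if_pos hk1]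
        · have hmval : (m:ℝ) ≤ t + 1 := by
            have hk1' : m ≤ k + 1 := le_of_not_gt hk1
            have : (m:ℝ) ≤ (k:ℝ) + 1 := by exact_mod_cast hk1'
            linarith [hmem.1]
          rw [hxzero (t+1) (Or.inr hmval), if_neg hk1]
      · rw [hxzero t (Or.inr ht2), hφ0, mul_zero, sum_indicator_zero m _ t (Or.inr ht2)]
    -- the two integrals
    have hIR : ∫ t in Ici (0:ℝ), x t * φ (x t)
        = ∑ j ∈ Finset.range m, c j * φ (c j) := by
      calc ∫ t in Ici (0:ℝ), x t * φ (x t)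
          = ∫ t in Ici (0:ℝ), (∑ j ∈ Finset.range m,
              (Ico (j:ℝ) (j+1)).indicator (fun _ => c j * φ (c j)) t) := by
            exact setIntegral_congr_fun measurableSet_Ici (fun t _ => hRfun t)
        _ = _ := integral_sum_indicator m _
    have hIL : ∫ t in Ici (0:ℝ), x (t + 1) * φ (x t)
        = ∑ j ∈ Finset.range m, (if j + 1 < m then c (j+1) else 0) * φ (c j) := by
      calc ∫ t in Ici (0:ℝ), x (t + 1) * φ (x t)
          = ∫ t in Ici (0:ℝ), (∑ j ∈ Finset.range m,
              (Ico (j:ℝ) (j+1)).indicator (fun _ => (if j + 1 < m then c (j+1) else 0) * φ (c j)) t) := by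
            exact setIntegral_congr_fun measurableSet_Ici (fun t _ => hLfun t)
        _ = _ := integral_sum_indicator m _
    -- compute sums
    have hSR : ∀ N : ℕ, ∑ j ∈ Finset.range (2*N), c j * φ (c j)
        = (N:ℝ) * (u * φ u + v * φ v) := by
      intro N
      induction N with
      | zero => simp
      | succ N ih =>
        have h2 : 2 * (N+1) = (2*N + 1) + 1 := by ring
        rw [h2, Finset.sum_range_succ, Finset.sum_range_succ, ih,
          (hceval N).1, (hceval N).2]
        push_cast
        ring
    have hSL : ∀ N : ℕ, ∑ j ∈ Finset.range (2*N), c (j+1) * φ (c j)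
        = (N:ℝ) * (v * φ u + u * φ v) := by
      intro N
      induction N with
      | zero => simp
      | succ N ih =>
        have h2 : 2 * (N+1) = (2*N + 1) + 1 := by ring
        have e1 : c (2*N + 1 + 1) = u := by
          have : 2*N + 1 + 1 = 2*(N+1) := by ring
          rw [this]; exact (hceval (N+1)).1
        rw [h2, Finset.sum_range_succ, Finset.sum_range_succ, ih,
          (hceval N).1, (hceval N).2, e1]
        push_cast
        ring
    have hScut : ∑ j ∈ Finset.range m, (if j + 1 < m then c (j+1) else 0) * φ (c j)
        = (∑ j ∈ Finset.range m, c (j+1) * φ (c j)) - u * φ v := by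
      have h2 : m = (2*n + 1) + 1 := by rw [hm]; ring
      rw [h2, Finset.sum_range_succ, Finset.sum_range_succ (f := fun j => c (j+1) * φ (c j))]
      have hlast1 : ¬ (2*n + 1 + 1 < 2*n + 1 + 1) := lt_irrefl _
      have e1 : c (2*n + 1 + 1) = u := by
        have : 2*n + 1 + 1 = 2*(n+1) := by ring
        rw [this]; exact (hceval (n+1)).1
      have e2 : c (2*n + 1) = v := (hceval n).2
      rw [if_neg hlast1, e1, e2]
      have : ∀ j ∈ Finset.range (2*n+1), (if j + 1 < 2*n + 1 + 1 then c (j+1) else 0) * φ (c j)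
          = c (j+1) * φ (c j) := by
        intro j hj
        have hj' := Finset.mem_range.1 hj
        rw [if_pos (by omega : j + 1 < 2*n + 1 + 1)]
      rw [Finset.sum_congr rfl this]
      ring
    have hineq := H 1 x hsig
    rw [hIR, hIL, hScut] at hineq
    have hm' : m = 2 * (n+1) := hm
    rw [hm', hSR (n+1), hSL (n+1)] at hineq
    push_cast at hineq
    linarith
  -- derive contradiction
  set D : ℝ := (u * φ u + v * φ v) - (v * φ u + u * φ v) with hD
  have hDneg : D < 0 := by
    have : D = (v - u) * (φ v - φ u) := by rw [hD]; ring
    rw [this]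
    apply mul_neg_of_pos_of_neg (by linarith) (by linarith)
  have hmain' : ∀ n : ℕ, ((n:ℝ)+1) * (-D) ≤ u * φ v := by
    intro n
    have := main n
    rw [hD]
    nlinarith [main n]
  obtain ⟨n, hn⟩ := exists_nat_gt ((u * φ v) / (-D))
  have hpos : (0:ℝ) < -D := by linarith
  have : u * φ v < ((n:ℝ)+1) * (-D) := by
    have h1 : (u * φ v) / (-D) < (n:ℝ) + 1 := by linarith
    have h3 := mul_lt_mul_of_pos_right h1 hpos
    rwa [div_mul_cancel₀ _ (ne_of_gt hpos)] at h3
  linarith [hmain' n]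

theorem static_shift_ineq_iff_monotone
    (φ : ℝ → ℝ) (hφ : Measurable φ) (hφ0 : φ 0 = 0)
    (hbound : ∃ C : ℝ, 0 ≤ C ∧ ∀ u : ℝ, |φ u| ≤ C * |u|) :
    (∀ (τ : ℝ) (x : ℝ → ℝ), IsSignal x →
      ∫ t in Ici (0:ℝ), x (t + τ) * φ (x t) ≤ ∫ t in Ici (0:ℝ), x t * φ (x t))
    ↔ Monotone φ := by
  obtain ⟨C, hC0, hC⟩ := hbound
  constructor
  · intro H
    exact bwd φ hφ0 (fun τ x hx => H τ x hx)
  · intro hmono τ x hx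
    exact fwd φ hφ hφ0 C hC0 hC hmono τ x hx.1 hx.2
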